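/- Let T > 0, let a, b, c : (0,T) × (0,1) → ℝ, and let u ∈ C⁰([0,T] × [0,1]) with u[t] ∈ C²((0,1)) for almost all t ∈ (0,T), ∂u/∂t existing and continuous on (0,T) × [0,1], the derivatives ∂u/∂x(t,0), ∂u/∂x(t,1) existing for all t ∈ (0,T], and ∂u/∂t = a·∂²u/∂x² + b·∂u/∂x + c·u for almost all t ∈ (0,T) and all x ∈ (0,1) (i.e., zero source term f ≡ 0). Let μ₀, μ₁ > 0 and λ₀, λ₁ ∈ ℝ be constants. Suppose a ≥ 0 on (0,T)×(0,1), there exist σ > 0 and η ∈ C²([0,1];(0,+∞)) with aη'' + bη' + (σ+c)η ≤ 0 on (0,T)×(0,1), μ₀η'(0) − λ₀η(0) < 0, μ₁η'(1) + λ₁η(1) > 0, and the nonlinear boundary conditions ( μ₀·∂u/∂x(t,0) − λ₀·u(t,0) )·u(t,0) = 0 and ( μ₁·∂u/∂x(t,1) + λ₁·u(t,1) )·u(t,1) = 0 hold for all t ∈ (0,T]. Then for all ζ ∈ [0,σ) and t ∈ (0,T]: ‖u[t]‖_{∞,η} ≤ exp(−ζt)·‖u[0]‖_{∞,η}. -/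

import Mathlib

open Set MeasureTheory Filter Topology


/-- slope sign: max at left endpoint of Icc 0 1 gives nonpositive one-sided derivative. -/
lemma aux_endpoint_left {f : ℝ → ℝ} {d : ℝ}
    (hd : HasDerivWithinAt f d (Icc 0 1) 0)
    (hmax : ∀ y ∈ Icc (0:ℝ) 1, f y ≤ f 0) : d ≤ 0 := by
  have hne : (𝓝[Ioc (0:ℝ) 1] 0).NeBot := by
    refine mem_closure_iff_nhdsWithin_neBot.mp ?_
    rw [closure_Ioc (one_ne_zero : (1:ℝ) ≠ 0).symm]
    exact ⟨le_refl 0, by norm_num⟩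
  have hts : Tendsto (slope f 0) (𝓝[Ioc (0:ℝ) 1] 0) (𝓝 d) := by
    refine (hasDerivWithinAt_iff_tendsto_slope.mp hd).mono_left (nhdsWithin_mono _ ?_)
    intro y hy; exact ⟨⟨hy.1.le, hy.2⟩, ne_of_gt hy.1⟩
  refine le_of_tendsto hts ?_
  filter_upwards [self_mem_nhdsWithin] with y hy
  have h1 : f y - f 0 ≤ 0 := sub_nonpos.mpr (hmax y ⟨hy.1.le, hy.2⟩)
  have : slope f 0 y = (f y - f 0) / (y - 0) := slope_def_field f 0 y
  rw [this]
  exact div_nonpos_of_nonpos_of_nonneg h1 (by linarith [hy.1])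

/-- slope sign: max at right endpoint of Icc 0 1 gives nonnegative one-sided derivative. -/
lemma aux_endpoint_right {f : ℝ → ℝ} {d : ℝ}
    (hd : HasDerivWithinAt f d (Icc 0 1) 1)
    (hmax : ∀ y ∈ Icc (0:ℝ) 1, f y ≤ f 1) : 0 ≤ d := by
  have hne : (𝓝[Ico (0:ℝ) 1] 1).NeBot := by
    refine mem_closure_iff_nhdsWithin_neBot.mp ?_
    rw [closure_Ico (one_ne_zero : (1:ℝ) ≠ 0).symm]
    exact ⟨by norm_num, le_refl 1⟩
  have hts : Tendsto (slope f 1) (𝓝[Ico (0:ℝ) 1] 1) (𝓝 d) := by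
    refine (hasDerivWithinAt_iff_tendsto_slope.mp hd).mono_left (nhdsWithin_mono _ ?_)
    intro y hy; exact ⟨⟨hy.1, hy.2.le⟩, ne_of_lt hy.2⟩
  refine ge_of_tendsto hts ?_
  filter_upwards [self_mem_nhdsWithin] with y hy
  have h1 : f y - f 1 ≤ 0 := sub_nonpos.mpr (hmax y ⟨hy.1, hy.2.le⟩)
  have : slope f 1 y = (f y - f 1) / (y - 1) := slope_def_field f 1 y
  rw [this]
  exact div_nonneg_iff.mpr (Or.inr ⟨h1, by linarith [hy.2]⟩)

/-- time version: if g s ≤ g t₀ for s ∈ Ioo 0 t₀ and g has derivative d at t₀ then 0 ≤ d. -/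
lemma aux_time {g : ℝ → ℝ} {d t₀ : ℝ} (ht₀ : 0 < t₀)
    (hg : HasDerivAt g d t₀) (hmax : ∀ s ∈ Ioo (0:ℝ) t₀, g s ≤ g t₀) : 0 ≤ d := by
  have hne : (𝓝[Ioo (0:ℝ) t₀] t₀).NeBot := by
    refine mem_closure_iff_nhdsWithin_neBot.mp ?_
    rw [closure_Ioo ht₀.ne]
    exact ⟨ht₀.le, le_refl _⟩
  have hts : Tendsto (slope g t₀) (𝓝[Ioo (0:ℝ) t₀] t₀) (𝓝 d) := by
    refine (hasDerivAt_iff_tendsto_slope.mp hg).mono_left (nhdsWithin_mono _ ?_)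
    intro y hy; exact ne_of_lt hy.2
  refine ge_of_tendsto hts ?_
  filter_upwards [self_mem_nhdsWithin] with s hs
  have h1 : g s - g t₀ ≤ 0 := sub_nonpos.mpr (hmax s hs)
  have : slope g t₀ s = (g s - g t₀) / (s - t₀) := slope_def_field g t₀ s
  rw [this]
  exact div_nonneg_iff.mpr (Or.inr ⟨h1, by linarith [hs.2]⟩)

/-- second-derivative test at an interior maximum. -/
lemma aux_second {f f' : ℝ → ℝ} {x f'' l r : ℝ} (hx : x ∈ Ioo l r)
    (hf : ∀ y ∈ Ioo l r, HasDerivAt f (f' y) y)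
    (hf'' : HasDerivAt f' f'' x)
    (hmax : ∀ y ∈ Ioo l r, f y ≤ f x) : f' x = 0 ∧ f'' ≤ 0 := by
  have hloc : IsLocalMax f x := by
    filter_upwards [isOpen_Ioo.mem_nhds hx] with y hy using hmax y hy
  have hfx0 : f' x = 0 := hloc.hasDerivAt_eq_zero (hf x hx)
  refine ⟨hfx0, ?_⟩
  by_contra hpos
  push_neg at hpos
  -- slope of f' tends to f'' > 0, so f' > 0 just right of x
  have hts : Tendsto (slope f' x) (𝓝[>] x) (𝓝 f'') :=
    (hasDerivAt_iff_tendsto_slope.mp hf'').mono_left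
      (nhdsWithin_mono _ (fun y hy => ne_of_gt hy))
  have hev : ∀ᶠ y in 𝓝[>] x, 0 < slope f' x y :=
    hts.eventually (eventually_gt_nhds hpos)
  have hev2 : ∀ᶠ y in 𝓝[>] x, y ∈ Ioo l r :=
    eventually_nhdsWithin_of_eventually_nhds (isOpen_Ioo.eventually_mem hx)
  obtain ⟨w, hw, hsub⟩ := mem_nhdsGT_iff_exists_Ioo_subset.mp (hev.and hev2)
  set w' := min w r with hw'
  have hxw' : x < w' := lt_min hw hx.2
  have hIoosub : Ioo x w' ⊆ Ioo l r := fun y hy =>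
    ⟨lt_trans hx.1 hy.1, lt_of_lt_of_le hy.2 (min_le_right _ _)⟩
  have hfpos : ∀ y ∈ Ioo x w', 0 < f' y := by
    intro y hy
    have := (hsub ⟨hy.1, lt_of_lt_of_le hy.2 (min_le_left _ _)⟩).1
    have hsl : slope f' x y = (f' y - f' x) / (y - x) := slope_def_field f' x y
    rw [hsl, hfx0, sub_zero] at this
    have hyx : 0 < y - x := by linarith [hy.1]
    rcases div_pos_iff.mp this with ⟨h,_⟩|⟨_,h⟩ <;> linarith
  set y₀ := (x + w') / 2 with hy₀
  have hy₀mem : y₀ ∈ Ioo x w' := ⟨by simp [hy₀]; linarith, by simp [hy₀]; linarith⟩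
  have hmono : StrictMonoOn f (Icc x y₀) := by
    apply strictMonoOn_of_deriv_pos (convex_Icc x y₀)
    · intro z hz
      rcases eq_or_lt_of_le hz.1 with h | h
      · subst h; exact (hf x hx).continuousAt.continuousWithinAt
      · have hz' : z ∈ Ioo l r := hIoosub ⟨h, lt_of_le_of_lt hz.2 hy₀mem.2⟩
        exact (hf z hz').continuousAt.continuousWithinAt
    · intro z hz
      rw [interior_Icc] at hz
      have hz2 : z ∈ Ioo x w' := ⟨hz.1, lt_trans hz.2 hy₀mem.2⟩
      rw [(hf z (hIoosub hz2)).deriv]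
      exact hfpos z hz2
  have h1 : f x < f y₀ := hmono ⟨le_refl x, hy₀mem.1.le⟩ ⟨hy₀mem.1.le, le_refl _⟩ hy₀mem.1
  have h2 : f y₀ ≤ f x := hmax y₀ (hIoosub hy₀mem)
  linarith

/-- At a positive maximum point of `f/η`, the PDE and boundary conditions force
`ft ≤ -σ f` there. Here everything is a slice at a fixed (good) time. -/
lemma step_good
    (μ₀ μ₁ lam₀ lam₁ σ : ℝ) (hμ₀ : 0 < μ₀) (hμ₁ : 0 < μ₁)
    (η η' η'' : ℝ → ℝ)
    (hη_pos : ∀ x ∈ Icc (0:ℝ) 1, 0 < η x)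
    (hη1 : ∀ x ∈ Icc (0:ℝ) 1, HasDerivWithinAt η (η' x) (Icc 0 1) x)
    (hη2 : ∀ x ∈ Icc (0:ℝ) 1, HasDerivWithinAt η' (η'' x) (Icc 0 1) x)
    (hbc0 : μ₀ * η' 0 - lam₀ * η 0 < 0)
    (hbc1 : μ₁ * η' 1 + lam₁ * η 1 > 0)
    (A B Cc f ft fx : ℝ → ℝ) (fxx : ℝ → ℝ)
    (hA : ∀ x ∈ Ioo (0:ℝ) 1, 0 ≤ A x)
    (hcond : ∀ x ∈ Ioo (0:ℝ) 1, A x * η'' x + B x * η' x + (σ + Cc x) * η x ≤ 0)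
    (hd1 : ∀ x ∈ Ioo (0:ℝ) 1, HasDerivAt f (fx x) x)
    (hd2 : ∀ x ∈ Ioo (0:ℝ) 1, HasDerivAt fx (fxx x) x)
    (hpde : ∀ x ∈ Ioo (0:ℝ) 1, ft x = A x * fxx x + B x * fx x + Cc x * f x)
    (hb0 : HasDerivWithinAt f (fx 0) (Icc 0 1) 0)
    (hb1 : HasDerivWithinAt f (fx 1) (Icc 0 1) 1)
    (hn0 : (μ₀ * fx 0 - lam₀ * f 0) * f 0 = 0)
    (hn1 : (μ₁ * fx 1 + lam₁ * f 1) * f 1 = 0)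
    (z : ℝ) (hz : z ∈ Icc (0:ℝ) 1)
    (hmax : ∀ x ∈ Icc (0:ℝ) 1, f x * η z ≤ f z * η x)
    (hpos : 0 < f z) :
    ft z ≤ -σ * f z := by
  have hηz := hη_pos z hz
  set K := f z / η z with hK
  have hKpos : 0 < K := div_pos hpos hηz
  have hKη : f z = K * η z := by rw [hK, div_mul_cancel₀ _ hηz.ne']
  have hle : ∀ x ∈ Icc (0:ℝ) 1, f x ≤ K * η x := by
    intro x hx
    have h := hmax x hx
    rw [hKη] at h
    have := hη_pos x hx
    nlinarith
  -- define the comparison function g = f - K η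
  rcases eq_or_lt_of_le hz.1 with h0 | h0
  · -- z = 0
    exfalso
    have hz0 : z = 0 := h0.symm
    subst hz0
    have hf0 : f 0 ≠ 0 := ne_of_gt hpos
    have hrob : μ₀ * fx 0 - lam₀ * f 0 = 0 := by
      rcases mul_eq_zero.mp hn0 with h | h
      · exact h
      · exact absurd h hf0
    have hder : HasDerivWithinAt (fun x => f x - K * η x) (fx 0 - K * η' 0) (Icc 0 1) 0 :=
      hb0.sub ((hη1 0 (by norm_num)).const_mul K)
    have hmg : ∀ y ∈ Icc (0:ℝ) 1, f y - K * η y ≤ f 0 - K * η 0 := by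
      intro y hy
      have := hle y hy
      nlinarith [hKη]
    have h1 : fx 0 - K * η' 0 ≤ 0 := aux_endpoint_left hder hmg
    have hrob' : μ₀ * fx 0 = lam₀ * (K * η 0) := by rw [← hKη]; linarith
    nlinarith [hrob', mul_neg_of_pos_of_neg hKpos hbc0,
      mul_le_mul_of_nonneg_left h1 hμ₀.le]
  rcases eq_or_lt_of_le hz.2 with h1 | h1
  · -- z = 1
    exfalso
    subst h1
    have hf1 : f 1 ≠ 0 := ne_of_gt hpos
    have hrob : μ₁ * fx 1 + lam₁ * f 1 = 0 := by
      rcases mul_eq_zero.mp hn1 with h | h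
      · exact h
      · exact absurd h hf1
    have hder : HasDerivWithinAt (fun x => f x - K * η x) (fx 1 - K * η' 1) (Icc 0 1) 1 :=
      hb1.sub ((hη1 1 (by norm_num)).const_mul K)
    have hmg : ∀ y ∈ Icc (0:ℝ) 1, f y - K * η y ≤ f 1 - K * η 1 := by
      intro y hy
      have := hle y hy
      nlinarith [hKη]
    have hge : 0 ≤ fx 1 - K * η' 1 := aux_endpoint_right hder hmg
    have hrob' : μ₁ * fx 1 = -(lam₁ * (K * η 1)) := by rw [← hKη]; linarith
    nlinarith [hrob', mul_pos hKpos hbc1,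
      mul_le_mul_of_nonneg_left hge hμ₁.le]
  -- interior case
  have hzI : z ∈ Ioo (0:ℝ) 1 := ⟨h0, h1⟩
  have hsubIcc : Ioo (0:ℝ) 1 ⊆ Icc (0:ℝ) 1 := Ioo_subset_Icc_self
  have hηd : ∀ y ∈ Ioo (0:ℝ) 1, HasDerivAt η (η' y) y := fun y hy =>
    (hη1 y (hsubIcc hy)).hasDerivAt (Icc_mem_nhds hy.1 hy.2)
  have hηd2 : HasDerivAt η' (η'' z) z :=
    (hη2 z hz).hasDerivAt (Icc_mem_nhds hzI.1 hzI.2)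
  have hgd : ∀ y ∈ Ioo (0:ℝ) 1, HasDerivAt (fun x => f x - K * η x) (fx y - K * η' y) y :=
    fun y hy => (hd1 y hy).sub ((hηd y hy).const_mul K)
  have hgd2 : HasDerivAt (fun y => fx y - K * η' y) (fxx z - K * η'' z) z :=
    (hd2 z hzI).sub (hηd2.const_mul K)
  have hmg : ∀ y ∈ Ioo (0:ℝ) 1, f y - K * η y ≤ f z - K * η z := by
    intro y hy
    have := hle y (hsubIcc hy)
    nlinarith [hKη]
  obtain ⟨he1, he2⟩ := aux_second hzI hgd hgd2 hmg
  -- he1 : fx z - K * η' z = 0, he2 : fxx z - K * η'' z ≤ 0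
  have hAz := hA z hzI
  have hcz := hcond z hzI
  have hp := hpde z hzI
  have hfx : fx z = K * η' z := by linarith
  have hfxx : A z * fxx z ≤ A z * (K * η'' z) := by nlinarith
  have hBfx : B z * fx z = B z * (K * η' z) := by rw [hfx]
  have hCf : Cc z * f z = Cc z * (K * η z) := by rw [← hKη]
  have hσf : σ * f z = σ * (K * η z) := by rw [← hKη]
  nlinarith [hp, hBfx, hCf, hσf, hfxx, mul_le_mul_of_nonneg_left hcz hKpos.le, hKη]

lemma one_sided
    (T : ℝ) (hT : 0 < T)
    (a b c u ut ux uxx : ℝ → ℝ → ℝ)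
    (hu_cont : ContinuousOn (fun p : ℝ × ℝ => u p.1 p.2) (Icc 0 T ×ˢ Icc 0 1))
    (hut : ∀ t ∈ Ioo (0:ℝ) T, ∀ x ∈ Icc (0:ℝ) 1,
      HasDerivAt (fun τ => u τ x) (ut t x) t)
    (hut_cont : ContinuousOn (fun p : ℝ × ℝ => ut p.1 p.2) (Ioo 0 T ×ˢ Icc 0 1))
    (hux_bd : ∀ t ∈ Ioc (0:ℝ) T,
      HasDerivWithinAt (u t) (ux t 0) (Icc 0 1) 0 ∧
      HasDerivWithinAt (u t) (ux t 1) (Icc 0 1) 1)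
    (hC2_pde : ∀ᵐ t ∂(volume.restrict (Ioo 0 T)),
      (∀ x ∈ Ioo (0:ℝ) 1, HasDerivAt (u t) (ux t x) x) ∧
      (∀ x ∈ Ioo (0:ℝ) 1, HasDerivAt (ux t) (uxx t x) x) ∧
      (∀ x ∈ Ioo (0:ℝ) 1,
        ut t x = a t x * uxx t x + b t x * ux t x + c t x * u t x))
    (ha : ∀ t ∈ Ioo (0:ℝ) T, ∀ x ∈ Ioo (0:ℝ) 1, 0 ≤ a t x)
    (μ₀ μ₁ lam₀ lam₁ : ℝ) (hμ₀ : 0 < μ₀) (hμ₁ : 0 < μ₁)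
    (σ : ℝ)
    (η η' η'' : ℝ → ℝ)
    (hη_pos : ∀ x ∈ Icc (0:ℝ) 1, 0 < η x)
    (hη1 : ∀ x ∈ Icc (0:ℝ) 1, HasDerivWithinAt η (η' x) (Icc 0 1) x)
    (hη2 : ∀ x ∈ Icc (0:ℝ) 1, HasDerivWithinAt η' (η'' x) (Icc 0 1) x)
    (hcond : ∀ t ∈ Ioo (0:ℝ) T, ∀ x ∈ Ioo (0:ℝ) 1,
      a t x * η'' x + b t x * η' x + (σ + c t x) * η x ≤ 0)
    (hbc0 : μ₀ * η' 0 - lam₀ * η 0 < 0)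
    (hbc1 : μ₁ * η' 1 + lam₁ * η 1 > 0)
    (hnlbc : ∀ t ∈ Ioc (0:ℝ) T,
      (μ₀ * ux t 0 - lam₀ * u t 0) * u t 0 = 0 ∧
      (μ₁ * ux t 1 + lam₁ * u t 1) * u t 1 = 0)
    (ζ : ℝ) (hζσ : ζ < σ)
    (M ε : ℝ) (hε : 0 < ε) (hM0 : 0 ≤ M)
    (hM : ∀ x ∈ Icc (0:ℝ) 1, u 0 x ≤ M * η x) :
    ∀ t ∈ Icc (0:ℝ) T, ∀ x ∈ Icc (0:ℝ) 1,
      u t x * Real.exp (ζ * t) ≤ (M + ε) * η x := by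
  have hC : 0 < M + ε := by linarith
  have hηc : ContinuousOn η (Icc (0:ℝ) 1) := fun x hx => (hη1 x hx).continuousWithinAt
  have hW_cont : ContinuousOn (fun p : ℝ × ℝ => u p.1 p.2 * Real.exp (ζ * p.1))
      (Icc 0 T ×ˢ Icc 0 1) :=
    hu_cont.mul ((Real.continuous_exp.comp (continuous_const.mul continuous_fst)).continuousOn)
  suffices hIco : ∀ s ∈ Ico (0:ℝ) T, ∀ x ∈ Icc (0:ℝ) 1,
      u s x * Real.exp (ζ * s) ≤ (M + ε) * η x by
    intro t ht x hx
    rcases lt_or_eq_of_le ht.2 with h | h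
    · exact hIco t ⟨ht.1, h⟩ x hx
    · subst h
      have hmem : ((t, x) : ℝ × ℝ) ∈ Icc 0 t ×ˢ Icc (0:ℝ) 1 := ⟨⟨hT.le, le_refl t⟩, hx⟩
      haveI hne : (𝓝[Ioo (0:ℝ) t] t).NeBot :=
        mem_closure_iff_nhdsWithin_neBot.mp (by rw [closure_Ioo hT.ne]; exact ⟨hT.le, le_refl t⟩)
      have hmap : Tendsto (fun τ => ((τ, x) : ℝ × ℝ)) (𝓝[Ioo (0:ℝ) t] t)
          (𝓝[Icc 0 t ×ˢ Icc (0:ℝ) 1] (t, x)) := by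
        apply tendsto_nhdsWithin_of_tendsto_nhds_of_eventually_within
        · exact ((continuous_id.prodMk continuous_const).tendsto t).mono_left nhdsWithin_le_nhds
        · filter_upwards [self_mem_nhdsWithin] with τ hτ
          exact ⟨⟨hτ.1.le, hτ.2.le⟩, hx⟩
      have hts : Tendsto (fun τ => u τ x * Real.exp (ζ * τ)) (𝓝[Ioo (0:ℝ) t] t)
          (𝓝 (u t x * Real.exp (ζ * t))) := (hW_cont (t, x) hmem).tendsto.comp hmap
      refine le_of_tendsto hts ?_
      filter_upwards [self_mem_nhdsWithin] with τ hτ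
      exact hIco τ ⟨hτ.1.le, hτ.2⟩ x hx
  by_contra hcon
  push_neg at hcon
  obtain ⟨sb, hsb, xh, hxh, hlt⟩ := hcon
  set Aset : Set ℝ :=
    {s | s ∈ Icc 0 sb ∧ ∃ x ∈ Icc (0:ℝ) 1, (M + ε) * η x ≤ u s x * Real.exp (ζ * s)}
    with hAdef
  have hsbA : sb ∈ Aset := ⟨⟨hsb.1, le_refl _⟩, xh, hxh, hlt.le⟩
  have hAbdd : BddBelow Aset := ⟨0, fun s hs => hs.1.1⟩
  have hAne : Aset.Nonempty := ⟨sb, hsbA⟩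
  set t₀ := sInf Aset with ht₀def
  have ht₀0 : 0 ≤ t₀ := le_csInf hAne (fun s hs => hs.1.1)
  have ht₀sb : t₀ ≤ sb := csInf_le hAbdd hsbA
  have ht₀T : t₀ < T := lt_of_le_of_lt ht₀sb hsb.2
  obtain ⟨aseq, -, haseq_tend, haseq_mem⟩ := exists_seq_tendsto_sInf hAne hAbdd
  choose y hy1 hy2 using fun n => (haseq_mem n).2
  obtain ⟨x₀, hx₀, φ, hφ, hyφ⟩ := isCompact_Icc.tendsto_subseq hy1
  have haφ : Tendsto (aseq ∘ φ) atTop (𝓝 t₀) := haseq_tend.comp hφ.tendsto_atTop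
  have hpair : Tendsto (fun n => ((aseq (φ n), y (φ n)) : ℝ × ℝ)) atTop
      (𝓝[Icc 0 T ×ˢ Icc (0:ℝ) 1] (t₀, x₀)) := by
    apply tendsto_nhdsWithin_of_tendsto_nhds_of_eventually_within
    · exact haφ.prodMk_nhds hyφ
    · filter_upwards with n
      exact ⟨⟨(haseq_mem (φ n)).1.1, le_trans (haseq_mem (φ n)).1.2 hsb.2.le⟩, hy1 (φ n)⟩
  have hWlim : Tendsto (fun n => u (aseq (φ n)) (y (φ n)) * Real.exp (ζ * aseq (φ n))) atTop
      (𝓝 (u t₀ x₀ * Real.exp (ζ * t₀))) :=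
    (hW_cont (t₀, x₀) ⟨⟨ht₀0, ht₀T.le⟩, hx₀⟩).tendsto.comp hpair
  have hηylim : Tendsto (fun n => (M + ε) * η (y (φ n))) atTop (𝓝 ((M + ε) * η x₀)) := by
    have h1 : Tendsto (fun n => η (y (φ n))) atTop (𝓝 (η x₀)) :=
      (hηc x₀ hx₀).tendsto.comp
        (tendsto_nhdsWithin_of_tendsto_nhds_of_eventually_within _ hyφ
          (by filter_upwards with n; exact hy1 (φ n)))
    exact h1.const_mul _
  have htouch : (M + ε) * η x₀ ≤ u t₀ x₀ * Real.exp (ζ * t₀) :=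
    le_of_tendsto_of_tendsto' hηylim hWlim (fun n => hy2 (φ n))
  have ht₀pos : 0 < t₀ := by
    rcases lt_or_eq_of_le ht₀0 with h | h
    · exact h
    exfalso
    rw [← h] at htouch
    have h1 := hM x₀ hx₀
    have h2 := hη_pos x₀ hx₀
    have h3 : (M + ε) * η x₀ ≤ u 0 x₀ := by simpa using htouch
    nlinarith
  have hbefore : ∀ s, 0 ≤ s → s < t₀ → ∀ x ∈ Icc (0:ℝ) 1,
      u s x * Real.exp (ζ * s) < (M + ε) * η x := by
    intro s h0 hlt' x hx
    by_contra hcon2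
    push_neg at hcon2
    have hsA : s ∈ Aset := ⟨⟨h0, le_trans hlt'.le ht₀sb⟩, x, hx, hcon2⟩
    exact absurd (csInf_le hAbdd hsA) (not_le.2 hlt')
  have hat : ∀ x ∈ Icc (0:ℝ) 1, u t₀ x * Real.exp (ζ * t₀) ≤ (M + ε) * η x := by
    intro x hx
    haveI hne : (𝓝[Ioo (0:ℝ) t₀] t₀).NeBot :=
      mem_closure_iff_nhdsWithin_neBot.mp
        (by rw [closure_Ioo ht₀pos.ne]; exact ⟨ht₀pos.le, le_refl _⟩)
    have hmap : Tendsto (fun τ => ((τ, x) : ℝ × ℝ)) (𝓝[Ioo (0:ℝ) t₀] t₀)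
        (𝓝[Icc 0 T ×ˢ Icc (0:ℝ) 1] (t₀, x)) := by
      apply tendsto_nhdsWithin_of_tendsto_nhds_of_eventually_within
      · exact ((continuous_id.prodMk continuous_const).tendsto t₀).mono_left nhdsWithin_le_nhds
      · filter_upwards [self_mem_nhdsWithin] with τ hτ
        exact ⟨⟨hτ.1.le, le_trans hτ.2.le ht₀T.le⟩, hx⟩
    refine le_of_tendsto ((hW_cont (t₀, x) ⟨⟨ht₀0, ht₀T.le⟩, hx⟩).tendsto.comp hmap) ?_
    filter_upwards [self_mem_nhdsWithin] with τ hτ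
    exact (hbefore τ hτ.1.le hτ.2 x hx).le
  have hteq : u t₀ x₀ * Real.exp (ζ * t₀) = (M + ε) * η x₀ :=
    le_antisymm (hat x₀ hx₀) htouch
  have hu₀pos : 0 < u t₀ x₀ := by
    by_contra hcc
    push_neg at hcc
    nlinarith [Real.exp_pos (ζ * t₀), hη_pos x₀ hx₀,
      mul_nonpos_of_nonpos_of_nonneg hcc (Real.exp_pos (ζ * t₀)).le]
  -- good time selection
  have hsel : ∀ n : ℕ, ∃ s, s ∈ Ioo (max (t₀ - 1/(n+1)) 0) t₀ ∧
      ((∀ x ∈ Ioo (0:ℝ) 1, HasDerivAt (u s) (ux s x) x) ∧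
       (∀ x ∈ Ioo (0:ℝ) 1, HasDerivAt (ux s) (uxx s x) x) ∧
       (∀ x ∈ Ioo (0:ℝ) 1,
         ut s x = a s x * uxx s x + b s x * ux s x + c s x * u s x)) := by
    intro n
    have hmaxlt : max (t₀ - 1/(↑n+1)) 0 < t₀ := by
      apply max_lt _ ht₀pos
      have : (0:ℝ) < 1/(↑n+1) := by positivity
      linarith
    have hJr : (volume.restrict (Ioo 0 T)) (Ioo (max (t₀ - 1/(↑n+1)) 0) t₀) ≠ 0 := by
      rw [Measure.restrict_apply measurableSet_Ioo,
        inter_eq_self_of_subset_left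
          (show Ioo (max (t₀ - 1/(↑n+1)) 0) t₀ ⊆ Ioo 0 T from
            fun s hs => ⟨lt_of_le_of_lt (le_max_right _ _) hs.1, lt_trans hs.2 ht₀T⟩),
        Real.volume_Ioo]
      exact (ENNReal.ofReal_pos.mpr (by linarith)).ne'
    have hfreq : ∃ᵐ s ∂(volume.restrict (Ioo 0 T)),
        s ∈ Ioo (max (t₀ - 1/(↑n+1)) 0) t₀ :=
      frequently_ae_mem_iff.mpr hJr
    obtain ⟨s, hs1, hs2⟩ := (hfreq.and_eventually hC2_pde).exists
    exact ⟨s, hs1, hs2⟩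
  choose sn hsn1 hsn2 using hsel
  have hsnIoo : ∀ n, sn n ∈ Ioo (0:ℝ) T := fun n =>
    ⟨lt_of_le_of_lt (le_max_right _ _) (hsn1 n).1, lt_trans (hsn1 n).2 ht₀T⟩
  have hsn_tend : Tendsto sn atTop (𝓝 t₀) := by
    have hlow : Tendsto (fun n : ℕ => t₀ - 1/(↑n+1)) atTop (𝓝 t₀) := by
      have h0 := tendsto_one_div_add_atTop_nhds_zero_nat (𝕜 := ℝ)
      have h1 : Tendsto (fun n : ℕ => t₀ - 1/(↑n+1)) atTop (𝓝 (t₀ - 0)) :=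
        tendsto_const_nhds.sub h0
      simpa using h1
    refine tendsto_of_tendsto_of_tendsto_of_le_of_le hlow tendsto_const_nhds ?_ ?_
    · intro n; exact le_trans (le_max_left _ _) (hsn1 n).1.le
    · intro n; exact (hsn1 n).2.le
  have hucont_slice : ∀ n, ContinuousOn (u (sn n)) (Icc (0:ℝ) 1) := by
    intro n
    have := hu_cont.comp
      ((continuous_const.prodMk continuous_id).continuousOn
        (s := Icc (0:ℝ) 1))
      (fun x hx => ⟨⟨(hsnIoo n).1.le, (hsnIoo n).2.le⟩, hx⟩)
    exact this
  have hmaxsel : ∀ n, ∃ z ∈ Icc (0:ℝ) 1,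
      ∀ w ∈ Icc (0:ℝ) 1, u (sn n) w / η w ≤ u (sn n) z / η z := by
    intro n
    obtain ⟨z, hz, hm⟩ := isCompact_Icc.exists_isMaxOn (nonempty_Icc.mpr zero_le_one)
      ((hucont_slice n).div hηc (fun x hx => (hη_pos x hx).ne'))
    exact ⟨z, hz, fun w hw => hm hw⟩
  choose zn hzn1 hzn2 using hmaxsel
  obtain ⟨xb, hxb, ψ, hψ, hzψ⟩ := isCompact_Icc.tendsto_subseq hzn1
  have hsψ : Tendsto (fun n => sn (ψ n)) atTop (𝓝 t₀) := hsn_tend.comp hψ.tendsto_atTop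
  have hpair2 : Tendsto (fun n => ((sn (ψ n), zn (ψ n)) : ℝ × ℝ)) atTop (𝓝 (t₀, xb)) :=
    hsψ.prodMk_nhds hzψ
  have hevin : ∀ᶠ n in (atTop : Filter ℕ), ((sn (ψ n), zn (ψ n)) : ℝ × ℝ) ∈ Icc 0 T ×ˢ Icc (0:ℝ) 1 := by
    filter_upwards with n
    exact ⟨⟨(hsnIoo (ψ n)).1.le, (hsnIoo (ψ n)).2.le⟩, hzn1 (ψ n)⟩
  have hevin2 : ∀ᶠ n in (atTop : Filter ℕ), ((sn (ψ n), zn (ψ n)) : ℝ × ℝ) ∈ Ioo 0 T ×ˢ Icc (0:ℝ) 1 := by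
    filter_upwards with n
    exact ⟨hsnIoo (ψ n), hzn1 (ψ n)⟩
  have hpairx₀ : Tendsto (fun n => ((sn (ψ n), x₀) : ℝ × ℝ)) atTop
      (𝓝[Icc 0 T ×ˢ Icc (0:ℝ) 1] (t₀, x₀)) := by
    apply tendsto_nhdsWithin_of_tendsto_nhds_of_eventually_within
    · exact hsψ.prodMk_nhds tendsto_const_nhds
    · filter_upwards with n
      exact ⟨⟨(hsnIoo (ψ n)).1.le, (hsnIoo (ψ n)).2.le⟩, hx₀⟩
  have hux₀ : Tendsto (fun n => u (sn (ψ n)) x₀) atTop (𝓝 (u t₀ x₀)) :=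
    (hu_cont (t₀, x₀) ⟨⟨ht₀0, ht₀T.le⟩, hx₀⟩).tendsto.comp hpairx₀
  have huz : Tendsto (fun n => u (sn (ψ n)) (zn (ψ n))) atTop (𝓝 (u t₀ xb)) :=
    (hu_cont (t₀, xb) ⟨⟨ht₀0, ht₀T.le⟩, hxb⟩).tendsto.comp
      (tendsto_nhdsWithin_of_tendsto_nhds_of_eventually_within _ hpair2 hevin)
  have hutz : Tendsto (fun n => ut (sn (ψ n)) (zn (ψ n))) atTop (𝓝 (ut t₀ xb)) :=
    (hut_cont (t₀, xb) ⟨⟨ht₀pos, ht₀T⟩, hxb⟩).tendsto.comp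
      (tendsto_nhdsWithin_of_tendsto_nhds_of_eventually_within _ hpair2 hevin2)
  have hηzb : Tendsto (fun n => η (zn (ψ n))) atTop (𝓝 (η xb)) :=
    (hηc xb hxb).tendsto.comp
      (tendsto_nhdsWithin_of_tendsto_nhds_of_eventually_within _ hzψ
        (by filter_upwards with n; exact hzn1 (ψ n)))
  have hev_pos : ∀ᶠ n in (atTop : Filter ℕ), 0 < u (sn (ψ n)) x₀ :=
    hux₀.eventually (eventually_gt_nhds hu₀pos)
  have hev_poz : ∀ᶠ n in (atTop : Filter ℕ), 0 < u (sn (ψ n)) (zn (ψ n)) := by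
    filter_upwards [hev_pos] with n hn
    have h := hzn2 (ψ n) x₀ hx₀
    have h0 := hη_pos x₀ hx₀
    have h1 := hη_pos _ (hzn1 (ψ n))
    have h2 : 0 < u (sn (ψ n)) (zn (ψ n)) / η (zn (ψ n)) :=
      lt_of_lt_of_le (div_pos hn h0) h
    rcases div_pos_iff.mp h2 with ⟨hh, _⟩ | ⟨_, hh⟩
    · exact hh
    · linarith
  have hkey : ∀ᶠ n in (atTop : Filter ℕ),
      ut (sn (ψ n)) (zn (ψ n)) ≤ -σ * u (sn (ψ n)) (zn (ψ n)) := by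
    filter_upwards [hev_poz] with n hn
    have hsI := hsnIoo (ψ n)
    have hsIoc : sn (ψ n) ∈ Ioc (0:ℝ) T := ⟨hsI.1, hsI.2.le⟩
    have hcross : ∀ x ∈ Icc (0:ℝ) 1,
        u (sn (ψ n)) x * η (zn (ψ n)) ≤ u (sn (ψ n)) (zn (ψ n)) * η x := by
      intro x hx
      exact (div_le_div_iff₀ (hη_pos x hx) (hη_pos _ (hzn1 (ψ n)))).mp (hzn2 (ψ n) x hx)
    exact step_good μ₀ μ₁ lam₀ lam₁ σ hμ₀ hμ₁ η η' η'' hη_pos hη1 hη2 hbc0 hbc1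
      (a (sn (ψ n))) (b (sn (ψ n))) (c (sn (ψ n))) (u (sn (ψ n))) (ut (sn (ψ n)))
      (ux (sn (ψ n))) (uxx (sn (ψ n)))
      (ha _ hsI) (hcond _ hsI)
      (hsn2 (ψ n)).1 (hsn2 (ψ n)).2.1 (hsn2 (ψ n)).2.2
      (hux_bd _ hsIoc).1 (hux_bd _ hsIoc).2
      (hnlbc _ hsIoc).1 (hnlbc _ hsIoc).2
      (zn (ψ n)) (hzn1 (ψ n)) hcross hn
  have hlim_ineq : ut t₀ xb ≤ -σ * u t₀ xb :=
    le_of_tendsto_of_tendsto hutz (huz.const_mul (-σ)) hkey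
  -- xb is also a touching point
  have hcross_lim : u t₀ x₀ * η xb ≤ u t₀ xb * η x₀ := by
    refine le_of_tendsto_of_tendsto' (hux₀.mul hηzb) (huz.mul tendsto_const_nhds) ?_
    intro n
    exact (div_le_div_iff₀ (hη_pos x₀ hx₀) (hη_pos _ (hzn1 (ψ n)))).mp (hzn2 (ψ n) x₀ hx₀)
  have hteq2 : u t₀ xb * Real.exp (ζ * t₀) = (M + ε) * η xb := by
    refine le_antisymm (hat xb hxb) ?_
    have h1 := mul_le_mul_of_nonneg_right hcross_lim (Real.exp_pos (ζ * t₀)).le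
    have h2 : u t₀ x₀ * Real.exp (ζ * t₀) * η xb = (M + ε) * η x₀ * η xb := by
      rw [hteq]
    have h3 := hη_pos x₀ hx₀
    nlinarith
  have hubar_pos : 0 < u t₀ xb := by
    by_contra hcc
    push_neg at hcc
    nlinarith [Real.exp_pos (ζ * t₀), hη_pos xb hxb,
      mul_nonpos_of_nonpos_of_nonneg hcc (Real.exp_pos (ζ * t₀)).le]
  -- time derivative at (t₀, xb)
  have hexp : HasDerivAt (fun τ : ℝ => Real.exp (ζ * τ)) (Real.exp (ζ * t₀) * ζ) t₀ := by
    have h := ((hasDerivAt_id t₀).const_mul ζ).exp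
    simpa using h
  have hder : HasDerivAt (fun τ => u τ xb * Real.exp (ζ * τ))
      (ut t₀ xb * Real.exp (ζ * t₀) + u t₀ xb * (Real.exp (ζ * t₀) * ζ)) t₀ :=
    (hut t₀ ⟨ht₀pos, ht₀T⟩ xb hxb).mul hexp
  have hge0 : 0 ≤ ut t₀ xb * Real.exp (ζ * t₀) + u t₀ xb * (Real.exp (ζ * t₀) * ζ) := by
    apply aux_time ht₀pos hder
    intro τ hτ
    calc u τ xb * Real.exp (ζ * τ) ≤ (M + ε) * η xb := (hbefore τ hτ.1.le hτ.2 xb hxb).le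
    _ = u t₀ xb * Real.exp (ζ * t₀) := hteq2.symm
  nlinarith [mul_le_mul_of_nonneg_right hlim_ineq (Real.exp_pos (ζ * t₀)).le,
    mul_pos (show (0:ℝ) < σ - ζ by linarith)
      (mul_pos hubar_pos (Real.exp_pos (ζ * t₀)))]

/-- **Remark after Corollary 2.3** (Karafyllis–Krstic): under conditions (2.11) and the
highly nonlinear boundary conditions
`(μ₀ u_x(t,0) - λ₀ u(t,0))·u(t,0) = 0`, `(μ₁ u_x(t,1) + λ₁ u(t,1))·u(t,1) = 0`,
and with zero source term, the solution decays exponentially in the weighted sup norm: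
`‖u[t]‖_{∞,η} ≤ exp(-ζt)·‖u[0]‖_{∞,η}`. -/
theorem nonlinear_bc_decay
    (T : ℝ) (hT : 0 < T)
    (a b c : ℝ → ℝ → ℝ)
    (u ut ux uxx : ℝ → ℝ → ℝ)
    (hu_cont : ContinuousOn (fun p : ℝ × ℝ => u p.1 p.2) (Set.Icc 0 T ×ˢ Set.Icc 0 1))
    (hut : ∀ t ∈ Set.Ioo (0:ℝ) T, ∀ x ∈ Set.Icc (0:ℝ) 1,
      HasDerivAt (fun τ => u τ x) (ut t x) t)
    (hut_cont : ContinuousOn (fun p : ℝ × ℝ => ut p.1 p.2) (Set.Ioo 0 T ×ˢ Set.Icc 0 1))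
    (hux_bd : ∀ t ∈ Set.Ioc (0:ℝ) T,
      HasDerivWithinAt (u t) (ux t 0) (Set.Icc 0 1) 0 ∧
      HasDerivWithinAt (u t) (ux t 1) (Set.Icc 0 1) 1)
    (hC2_pde : ∀ᵐ t ∂(volume.restrict (Set.Ioo 0 T)),
      (∀ x ∈ Set.Ioo (0:ℝ) 1, HasDerivAt (u t) (ux t x) x) ∧
      (∀ x ∈ Set.Ioo (0:ℝ) 1, HasDerivAt (ux t) (uxx t x) x) ∧
      ContinuousOn (uxx t) (Set.Ioo 0 1) ∧
      (∀ x ∈ Set.Ioo (0:ℝ) 1,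
        ut t x = a t x * uxx t x + b t x * ux t x + c t x * u t x))
    (ha : ∀ t ∈ Set.Ioo (0:ℝ) T, ∀ x ∈ Set.Ioo (0:ℝ) 1, 0 ≤ a t x)
    (μ₀ μ₁ lam₀ lam₁ : ℝ) (hμ₀ : 0 < μ₀) (hμ₁ : 0 < μ₁)
    (σ : ℝ) (hσ : 0 < σ)
    (η η' η'' : ℝ → ℝ)
    (hη_pos : ∀ x ∈ Set.Icc (0:ℝ) 1, 0 < η x)
    (hη1 : ∀ x ∈ Set.Icc (0:ℝ) 1, HasDerivWithinAt η (η' x) (Set.Icc 0 1) x)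
    (hη2 : ∀ x ∈ Set.Icc (0:ℝ) 1, HasDerivWithinAt η' (η'' x) (Set.Icc 0 1) x)
    (hη''_cont : ContinuousOn η'' (Set.Icc 0 1))
    (hcond : ∀ t ∈ Set.Ioo (0:ℝ) T, ∀ x ∈ Set.Ioo (0:ℝ) 1,
      a t x * η'' x + b t x * η' x + (σ + c t x) * η x ≤ 0)
    (hbc0 : μ₀ * η' 0 - lam₀ * η 0 < 0)
    (hbc1 : μ₁ * η' 1 + lam₁ * η 1 > 0)
    (hnlbc : ∀ t ∈ Set.Ioc (0:ℝ) T,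
      (μ₀ * ux t 0 - lam₀ * u t 0) * u t 0 = 0 ∧
      (μ₁ * ux t 1 + lam₁ * u t 1) * u t 1 = 0) :
    ∀ ζ ∈ Set.Ico (0:ℝ) σ, ∀ t ∈ Set.Ioc (0:ℝ) T,
      sSup ((fun x => |u t x| / η x) '' Set.Icc 0 1) ≤
        Real.exp (-ζ * t) * sSup ((fun x => |u 0 x| / η x) '' Set.Icc 0 1) := by
  intro ζ hζ t ht
  have hηc : ContinuousOn η (Icc (0:ℝ) 1) := fun x hx => (hη1 x hx).continuousWithinAt
  have hu0c : ContinuousOn (fun x => u 0 x) (Icc (0:ℝ) 1) :=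
    hu_cont.comp ((continuous_const.prodMk continuous_id).continuousOn)
      (fun x hx => ⟨⟨le_refl 0, hT.le⟩, hx⟩)
  have hScont : ContinuousOn (fun x => |u 0 x| / η x) (Icc (0:ℝ) 1) :=
    (hu0c.abs).div hηc (fun x hx => (hη_pos x hx).ne')
  have hbdd : BddAbove ((fun x => |u 0 x| / η x) '' Icc 0 1) :=
    (isCompact_Icc.image_of_continuousOn hScont).bddAbove
  set M := sSup ((fun x => |u 0 x| / η x) '' Icc 0 1) with hMdef
  have hMe : ∀ x ∈ Icc (0:ℝ) 1, |u 0 x| / η x ≤ M :=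
    fun x hx => le_csSup hbdd (mem_image_of_mem _ hx)
  have hM0 : 0 ≤ M := by
    have h1 := hMe 0 ⟨le_refl 0, zero_le_one⟩
    have h2 := hη_pos 0 ⟨le_refl 0, zero_le_one⟩
    have : (0:ℝ) ≤ |u 0 0| / η 0 := by positivity
    linarith
  have hMabs : ∀ x ∈ Icc (0:ℝ) 1, |u 0 x| ≤ M * η x :=
    fun x hx => (div_le_iff₀ (hη_pos x hx)).mp (hMe x hx)
  have hC2' : ∀ᵐ s ∂(volume.restrict (Ioo 0 T)),
      (∀ x ∈ Ioo (0:ℝ) 1, HasDerivAt (u s) (ux s x) x) ∧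
      (∀ x ∈ Ioo (0:ℝ) 1, HasDerivAt (ux s) (uxx s x) x) ∧
      (∀ x ∈ Ioo (0:ℝ) 1,
        ut s x = a s x * uxx s x + b s x * ux s x + c s x * u s x) :=
    hC2_pde.mono (fun s hs => ⟨hs.1, hs.2.1, hs.2.2.2⟩)
  have hup : ∀ ε, 0 < ε → ∀ x ∈ Icc (0:ℝ) 1,
      u t x * Real.exp (ζ * t) ≤ (M + ε) * η x := by
    intro ε hε x hx
    exact one_sided T hT a b c u ut ux uxx hu_cont hut hut_cont hux_bd hC2' ha
      μ₀ μ₁ lam₀ lam₁ hμ₀ hμ₁ σ η η' η'' hη_pos hη1 hη2 hcond hbc0 hbc1 hnlbc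
      ζ hζ.2 M ε hε hM0
      (fun x hx => le_trans (le_abs_self _) (hMabs x hx))
      t ⟨ht.1.le, ht.2⟩ x hx
  have hdn : ∀ ε, 0 < ε → ∀ x ∈ Icc (0:ℝ) 1,
      -u t x * Real.exp (ζ * t) ≤ (M + ε) * η x := by
    intro ε hε x hx
    exact one_sided T hT a b c (fun s x => -u s x) (fun s x => -ut s x)
      (fun s x => -ux s x) (fun s x => -uxx s x)
      hu_cont.neg
      (fun t' ht' x hx => (hut t' ht' x hx).neg)
      hut_cont.neg
      (fun t' ht' => ⟨(hux_bd t' ht').1.neg, (hux_bd t' ht').2.neg⟩)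
      (hC2'.mono (fun s hs => ⟨fun x hx => (hs.1 x hx).neg, fun x hx => (hs.2.1 x hx).neg,
        fun x hx => by linear_combination -(hs.2.2 x hx)⟩))
      ha μ₀ μ₁ lam₀ lam₁ hμ₀ hμ₁ σ η η' η'' hη_pos hη1 hη2 hcond hbc0 hbc1
      (fun t' ht' => ⟨by linear_combination (hnlbc t' ht').1,
        by linear_combination (hnlbc t' ht').2⟩)
      ζ hζ.2 M ε hε hM0
      (fun x hx => by have := (abs_le.mp (hMabs x hx)).1; show -u 0 x ≤ M * η x; linarith)
      t ⟨ht.1.le, ht.2⟩ x hx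
  have hbound : ∀ x ∈ Icc (0:ℝ) 1, |u t x| * Real.exp (ζ * t) ≤ M * η x := by
    intro x hx
    have hηx := hη_pos x hx
    refine le_of_forall_pos_le_add ?_
    intro δ hδ
    have hε : 0 < δ / η x := by positivity
    have h1 := hup (δ / η x) hε x hx
    have h2 := hdn (δ / η x) hε x hx
    have habs : |u t x| * Real.exp (ζ * t) = |u t x * Real.exp (ζ * t)| := by
      rw [abs_mul, abs_of_pos (Real.exp_pos _)]
    have h3 : |u t x * Real.exp (ζ * t)| ≤ (M + δ / η x) * η x :=
      abs_le.mpr ⟨by linarith, h1⟩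
    have h4 : (M + δ / η x) * η x = M * η x + δ := by
      field_simp
    linarith [habs ▸ h3]
  have hfinal : ∀ x ∈ Icc (0:ℝ) 1, |u t x| / η x ≤ Real.exp (-ζ * t) * M := by
    intro x hx
    have hηx := hη_pos x hx
    rw [div_le_iff₀ hηx]
    have h1 := hbound x hx
    have he : Real.exp (-ζ * t) * Real.exp (ζ * t) = 1 := by
      rw [← Real.exp_add]; norm_num
    have h2 : Real.exp (-ζ * t) * (|u t x| * Real.exp (ζ * t)) = |u t x| := by
      calc Real.exp (-ζ * t) * (|u t x| * Real.exp (ζ * t))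
          = |u t x| * (Real.exp (-ζ * t) * Real.exp (ζ * t)) := by ring
        _ = |u t x| := by rw [he, mul_one]
    have h3 := mul_le_mul_of_nonneg_left h1 (Real.exp_pos (-ζ * t)).le
    rw [h2] at h3
    calc |u t x| ≤ Real.exp (-ζ * t) * (M * η x) := h3
      _ = Real.exp (-ζ * t) * M * η x := by ring
  refine Real.sSup_le ?_ (mul_nonneg (Real.exp_pos _).le hM0)
  rintro w ⟨x, hx, rfl⟩
  exact hfinal x hx
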